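/- Let H₁ ≤ H₂ be continuous functions on (0,∞), and let h₁, h₂ be continuous functions with H₁ ≤ hᵢ ≤ H₂ such that each hᵢ is concave on every interval on which hᵢ < H₂. Then h := min(h₁, h₂) is continuous, satisfies H₁ ≤ h ≤ H₂, and is concave on every interval on which h < H₂. -/

import Mathlib

open Set

private lemma lemA (H₂ f h : ℝ → ℝ) (m c a b z : ℝ)
    (h0 : Icc a b ⊆ Ioi 0) (haz : a < z) (hzb : z < b)
    (hfc : ContinuousOn f (Icc a b)) (hH₂c : ContinuousOn H₂ (Icc a b))
    (hhf : ∀ y ∈ Icc a b, h y ≤ f y)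
    (hhH : ∀ y ∈ Icc a b, h y < H₂ y)
    (hfz : f z = h z)
    (hφa : m * a + c ≤ h a)
    (hmax : ∀ y ∈ Icc a b, m * y + c - h y ≤ m * z + c - h z)
    (hpos : 0 < m * z + c - h z)
    (hcc : ∀ J : Set ℝ, J ⊆ Ioi 0 → Convex ℝ J → (∀ y ∈ J, f y < H₂ y) →
      ConcaveOn ℝ J f) :
    False := by
  have hab : a < b := haz.trans hzb
  have hzmem : z ∈ Icc a b := ⟨haz.le, hzb.le⟩
  -- ψ y := f y - (m*y + c)
  have hψz : f z - (m * z + c) < 0 := by rw [hfz]; linarith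
  have hψlb : ∀ y ∈ Icc a b, f z - (m * z + c) ≤ f y - (m * y + c) := by
    intro y hy
    have h1 := hhf y hy
    have h2 := hmax y hy
    rw [hfz]; linarith
  have hstrict : ∀ y ∈ Icc a b, H₂ y ≤ f y →
      f z - (m * z + c) < f y - (m * y + c) := by
    intro y hy hy2
    have h1 := hhH y hy
    have h2 := hmax y hy
    rw [hfz]; linarith
  -- left set
  set S₁ : Set ℝ := Icc a z ∩ (fun y => f y - H₂ y) ⁻¹' Ici 0 with hS₁def
  have hIccsub : Icc a z ⊆ Icc a b := Icc_subset_Icc le_rfl hzb.le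
  have hS₁closed : IsClosed S₁ :=
    ContinuousOn.preimage_isClosed_of_isClosed
      (((hfc.mono hIccsub).sub (hH₂c.mono hIccsub))) isClosed_Icc isClosed_Ici
  have hS₁mem : ∀ y ∈ S₁, y ∈ Icc a z ∧ H₂ y ≤ f y := by
    intro y hy
    exact ⟨hy.1, by have := hy.2; simpa [sub_nonneg] using this⟩
  set T := insert a S₁ with hTdef
  have hTsub : T ⊆ Icc a z := by
    intro y hy
    rcases hy with rfl | hy
    · exact ⟨le_rfl, haz.le⟩
    · exact hy.1
  have hTclosed : IsClosed T := by
    rw [hTdef, insert_eq]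
    exact isClosed_singleton.union hS₁closed
  have hTbdd : BddAbove T := BddAbove.mono hTsub bddAbove_Icc
  have hTne : T.Nonempty := ⟨a, mem_insert _ _⟩
  set α := sSup T with hαdef
  have hαT : α ∈ T := hTclosed.csSup_mem hTne hTbdd
  have hαz : α ≤ z := csSup_le hTne fun y hy => (hTsub hy).2
  have hαa : a ≤ α := le_csSup hTbdd (mem_insert _ _)
  have hαmem : α ∈ Icc a b := ⟨hαa, hαz.trans hzb.le⟩
  have hαlt : α < z := by
    rcases eq_or_lt_of_le hαz with heq | hlt
    · exfalso
      rcases hαT with heqa | hS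
      · rw [heq] at heqa; exact absurd heqa.symm haz.ne
      · have h2 := (hS₁mem _ hS).2
        rw [heq] at h2
        have := hhH z hzmem
        rw [← hfz] at this
        linarith
    · exact hlt
  have hψα : f z - (m * z + c) < f α - (m * α + c) := by
    rcases hαT with heqa | hS
    · rw [heqa, hfz]
      have h1 := hhf a ⟨le_rfl, hab.le⟩
      linarith
    · exact hstrict α hαmem (hS₁mem _ hS).2
  -- right set
  set S₂ : Set ℝ := Icc z b ∩ (fun y => f y - H₂ y) ⁻¹' Ici 0 with hS₂def
  have hIccsub₂ : Icc z b ⊆ Icc a b := Icc_subset_Icc haz.le le_rfl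
  have hS₂closed : IsClosed S₂ :=
    ContinuousOn.preimage_isClosed_of_isClosed
      (((hfc.mono hIccsub₂).sub (hH₂c.mono hIccsub₂))) isClosed_Icc isClosed_Ici
  have hS₂mem : ∀ y ∈ S₂, y ∈ Icc z b ∧ H₂ y ≤ f y := by
    intro y hy
    exact ⟨hy.1, by have := hy.2; simpa [sub_nonneg] using this⟩
  set T₂ := insert b S₂ with hT₂def
  have hT₂sub : T₂ ⊆ Icc z b := by
    intro y hy
    rcases hy with rfl | hy
    · exact ⟨hzb.le, le_rfl⟩
    · exact hy.1
  have hT₂closed : IsClosed T₂ := by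
    rw [hT₂def, insert_eq]
    exact isClosed_singleton.union hS₂closed
  have hT₂bdd : BddBelow T₂ := BddBelow.mono hT₂sub bddBelow_Icc
  have hT₂ne : T₂.Nonempty := ⟨b, mem_insert _ _⟩
  set β := sInf T₂ with hβdef
  have hβT : β ∈ T₂ := hT₂closed.csInf_mem hT₂ne hT₂bdd
  have hzβ : z ≤ β := le_csInf hT₂ne fun y hy => (hT₂sub hy).1
  have hβb : β ≤ b := csInf_le hT₂bdd (mem_insert _ _)
  have hβlt : z < β := by
    rcases eq_or_lt_of_le hzβ with heq | hlt
    · exfalso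
      rcases hβT with heqb | hS
      · rw [← heq] at heqb; exact absurd heqb hzb.ne
      · have h2 := (hS₂mem _ hS).2
        rw [← heq] at h2
        have := hhH z hzmem
        rw [← hfz] at this
        linarith
    · exact hlt
  -- strict minorization on (α, β)
  have hopen : ∀ y ∈ Icc a b, α < y → y < β → f y < H₂ y := by
    intro y hy h1 h2
    by_contra hcon
    push_neg at hcon
    rcases le_total y z with hyz | hzy
    · have : y ∈ S₁ := ⟨⟨hy.1, hyz⟩, by simpa [sub_nonneg] using hcon⟩
      have : y ≤ α := le_csSup hTbdd (mem_insert_of_mem _ this)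
      linarith
    · have : y ∈ S₂ := ⟨⟨hzy, hy.2⟩, by simpa [sub_nonneg] using hcon⟩
      have : β ≤ y := csInf_le hT₂bdd (mem_insert_of_mem _ this)
      linarith
  -- pick β'
  set β' := (z + β) / 2 with hβ'def
  have hzβ' : z < β' := by rw [hβ'def]; linarith
  have hβ'β : β' < β := by rw [hβ'def]; linarith
  have hβ'mem : β' ∈ Icc a b := ⟨haz.le.trans hzβ'.le, hβ'β.le.trans hβb⟩
  have hψβ' : f z - (m * z + c) ≤ f β' - (m * β' + c) := hψlb β' hβ'mem
  -- pick α' via continuity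
  have hψcont : ContinuousOn (fun y => f y - (m * y + c)) (Icc a b) :=
    hfc.sub ((continuous_const.mul continuous_id).add continuous_const).continuousOn
  have hIoosub : Ioo α z ⊆ Icc a b := fun y hy =>
    ⟨hαa.trans hy.1.le, hy.2.le.trans hzb.le⟩
  have hcwa : Filter.Tendsto (fun y => f y - (m * y + c)) (nhdsWithin α (Ioo α z))
      (nhds (f α - (m * α + c))) := (hψcont α hαmem).mono hIoosub
  have hclos : α ∈ closure (Ioo α z) := by
    rw [closure_Ioo hαlt.ne]
    exact ⟨le_rfl, hαlt.le⟩
  haveI hnb : (nhdsWithin α (Ioo α z)).NeBot := mem_closure_iff_nhdsWithin_neBot.mp hclos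
  have hev : ∀ᶠ y in nhdsWithin α (Ioo α z),
      f z - (m * z + c) < f y - (m * y + c) := hcwa.eventually (eventually_gt_nhds hψα)
  obtain ⟨α', hα'mem, hα'⟩ := (eventually_mem_nhdsWithin.and hev).exists
  -- apply concavity on [α', β']
  have hα'β' : α' < β' := hα'mem.2.trans hzβ'
  have hα'ab : a ≤ α' := hαa.trans hα'mem.1.le
  have hsub : Icc α' β' ⊆ Icc a b := Icc_subset_Icc hα'ab (hβ'β.le.trans hβb)
  have hconc : ConcaveOn ℝ (Icc α' β') f := by
    refine hcc _ (hsub.trans h0) (convex_Icc _ _) ?_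
    intro y hy
    exact hopen y (hsub hy) (hα'mem.1.trans_le hy.1) (lt_of_le_of_lt hy.2 hβ'β)
  set lam := (β' - z) / (β' - α') with hlamdef
  set mu := (z - α') / (β' - α') with hmudef
  have hden : 0 < β' - α' := by linarith
  have hlampos : 0 < lam := div_pos (by linarith) hden
  have hmupos : 0 < mu := div_pos (by linarith [hα'mem.2]) hden
  have hsum : lam + mu = 1 := by
    rw [hlamdef, hmudef, ← add_div, div_eq_one_iff_eq hden.ne']
    ring
  have hcomb : lam * α' + mu * β' = z := by
    rw [hlamdef, hmudef]
    field_simp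
    ring
  have happly := hconc.2 (left_mem_Icc.mpr hα'β'.le) (right_mem_Icc.mpr hα'β'.le)
    hlampos.le hmupos.le hsum
  simp only [smul_eq_mul, hcomb] at happly
  have hlin : m * z + c = lam * (m * α' + c) + mu * (m * β' + c) := by
    linear_combination (-m) * hcomb + (-c) * hsum
  have h1 : lam * (f z - (m * z + c)) < lam * (f α' - (m * α' + c)) :=
    mul_lt_mul_of_pos_left hα' hlampos
  have h2 : mu * (f z - (m * z + c)) ≤ mu * (f β' - (m * β' + c)) :=
    mul_le_mul_of_nonneg_left hψβ' hmupos.le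
  have h3 : (lam + mu) * (f z - (m * z + c)) = f z - (m * z + c) := by
    rw [hsum, one_mul]
  nlinarith [h1, h2, h3, happly, hlin]

private lemma lemB (H₂ h₁ h₂ : ℝ → ℝ)
    (hH₂ : ContinuousOn H₂ (Ioi 0))
    (hc₁ : ContinuousOn h₁ (Ioi 0)) (hc₂ : ContinuousOn h₂ (Ioi 0))
    (hcc₁ : ∀ J : Set ℝ, J ⊆ Ioi 0 → Convex ℝ J → (∀ y ∈ J, h₁ y < H₂ y) →
      ConcaveOn ℝ J h₁)
    (hcc₂ : ∀ J : Set ℝ, J ⊆ Ioi 0 → Convex ℝ J → (∀ y ∈ J, h₂ y < H₂ y) →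
      ConcaveOn ℝ J h₂)
    (a b m c : ℝ) (hab : a < b) (h0 : Icc a b ⊆ Ioi 0)
    (hlt : ∀ y ∈ Icc a b, min (h₁ y) (h₂ y) < H₂ y)
    (hla : m * a + c ≤ min (h₁ a) (h₂ a)) (hlb : m * b + c ≤ min (h₁ b) (h₂ b)) :
    ∀ z ∈ Icc a b, m * z + c ≤ min (h₁ z) (h₂ z) := by
  by_contra hcon
  push_neg at hcon
  obtain ⟨z, hz, hzlt⟩ := hcon
  set h : ℝ → ℝ := fun y => min (h₁ y) (h₂ y) with hhdef
  have hhc : ContinuousOn h (Icc a b) := (hc₁.mono h0).inf (hc₂.mono h0)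
  have hφc : ContinuousOn (fun y => m * y + c - h y) (Icc a b) :=
    (((continuous_const.mul continuous_id).add continuous_const).continuousOn).sub hhc
  obtain ⟨z0, hz0mem, hz0max⟩ := isCompact_Icc.exists_isMaxOn ⟨z, hz⟩ hφc
  have hmax : ∀ y ∈ Icc a b, m * y + c - h y ≤ m * z0 + c - h z0 := fun y hy => hz0max hy
  have hpos : 0 < m * z0 + c - h z0 := by
    have := hmax z hz
    simp only [hhdef] at this ⊢
    linarith
  have haz0 : a < z0 := by
    rcases eq_or_lt_of_le hz0mem.1 with heq | hlt'
    · exfalso; rw [← heq] at hpos; simp only [hhdef] at hpos; linarith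
    · exact hlt'
  have hz0b : z0 < b := by
    rcases eq_or_lt_of_le hz0mem.2 with heq | hlt'
    · exfalso; rw [heq] at hpos; simp only [hhdef] at hpos; linarith
    · exact hlt'
  have hhf₁ : ∀ y ∈ Icc a b, h y ≤ h₁ y := fun y _ => min_le_left _ _
  have hhf₂ : ∀ y ∈ Icc a b, h y ≤ h₂ y := fun y _ => min_le_right _ _
  rcases min_choice (h₁ z0) (h₂ z0) with hch | hch
  · exact lemA H₂ h₁ h m c a b z0 h0 haz0 hz0b (hc₁.mono h0) (hH₂.mono h0)
      hhf₁ hlt hch.symm hla hmax hpos hcc₁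
  · exact lemA H₂ h₂ h m c a b z0 h0 haz0 hz0b (hc₂.mono h0) (hH₂.mono h0)
      hhf₂ hlt hch.symm hla hmax hpos hcc₂

/-- The minimum of two continuous functions squeezed between `H₁` and `H₂` and concave on
every interval of strict minorization of `H₂` again has these properties. -/
theorem min_mem_H (H₁ H₂ h₁ h₂ : ℝ → ℝ)
    (hH₁ : ContinuousOn H₁ (Ioi 0)) (hH₂ : ContinuousOn H₂ (Ioi 0))
    (hH₁₂ : ∀ y ∈ Ioi (0:ℝ), H₁ y ≤ H₂ y)
    (hc₁ : ContinuousOn h₁ (Ioi 0)) (hc₂ : ContinuousOn h₂ (Ioi 0))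
    (hb₁ : ∀ y ∈ Ioi (0:ℝ), H₁ y ≤ h₁ y ∧ h₁ y ≤ H₂ y)
    (hb₂ : ∀ y ∈ Ioi (0:ℝ), H₁ y ≤ h₂ y ∧ h₂ y ≤ H₂ y)
    (hcc₁ : ∀ J : Set ℝ, J ⊆ Ioi 0 → Convex ℝ J → (∀ y ∈ J, h₁ y < H₂ y) →
      ConcaveOn ℝ J h₁)
    (hcc₂ : ∀ J : Set ℝ, J ⊆ Ioi 0 → Convex ℝ J → (∀ y ∈ J, h₂ y < H₂ y) →
      ConcaveOn ℝ J h₂) :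
    ContinuousOn (fun y => min (h₁ y) (h₂ y)) (Ioi 0) ∧
      (∀ y ∈ Ioi (0:ℝ), H₁ y ≤ min (h₁ y) (h₂ y) ∧ min (h₁ y) (h₂ y) ≤ H₂ y) ∧
      (∀ J : Set ℝ, J ⊆ Ioi 0 → Convex ℝ J → (∀ y ∈ J, min (h₁ y) (h₂ y) < H₂ y) →
        ConcaveOn ℝ J (fun y => min (h₁ y) (h₂ y))) := by
  refine ⟨hc₁.inf hc₂, ?_, ?_⟩
  · intro y hy
    exact ⟨le_min (hb₁ y hy).1 (hb₂ y hy).1, min_le_of_left_le (hb₁ y hy).2⟩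
  · intro J hJ0 hJc hJlt
    refine ⟨hJc, ?_⟩
    intro x hx y hy s t hs ht hst
    simp only [smul_eq_mul]
    -- key chord lemma for ordered points
    have key : ∀ u ∈ J, ∀ v ∈ J, u < v → ∀ p q : ℝ, 0 ≤ p → 0 ≤ q → p + q = 1 →
        p * min (h₁ u) (h₂ u) + q * min (h₁ v) (h₂ v) ≤
          min (h₁ (p * u + q * v)) (h₂ (p * u + q * v)) := by
      intro u hu v hv huv p q hp hq hpq
      set m := (min (h₁ v) (h₂ v) - min (h₁ u) (h₂ u)) / (v - u) with hmdef
      set c := min (h₁ u) (h₂ u) - m * u with hcdef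
      have hvu : v - u ≠ 0 := sub_ne_zero.mpr huv.ne'
      have heu : m * u + c = min (h₁ u) (h₂ u) := by rw [hcdef]; ring
      have hev : m * v + c = min (h₁ v) (h₂ v) := by
        rw [hcdef, hmdef]; field_simp; ring
      have hIccJ : Icc u v ⊆ J := hJc.ordConnected.out hu hv
      have hmemz : p * u + q * v ∈ Icc u v := by
        have e1 : p * u + q * v - u = q * (v - u) := by linear_combination u * hpq
        have e2 : v - (p * u + q * v) = p * (v - u) := by linear_combination (-v) * hpq
        constructor
        · have := mul_nonneg hq (sub_nonneg.mpr huv.le); linarith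
        · have := mul_nonneg hp (sub_nonneg.mpr huv.le); linarith
      have hch := lemB H₂ h₁ h₂ hH₂ hc₁ hc₂ hcc₁ hcc₂ u v m c huv
        (hIccJ.trans hJ0) (fun y hy => hJlt y (hIccJ hy)) heu.le hev.le
        (p * u + q * v) hmemz
      calc p * min (h₁ u) (h₂ u) + q * min (h₁ v) (h₂ v)
          = m * (p * u + q * v) + c := by
            rw [← heu, ← hev]; linear_combination c * hpq
        _ ≤ min (h₁ (p * u + q * v)) (h₂ (p * u + q * v)) := hch
    rcases lt_trichotomy x y with hxy | hxy | hxy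
    · exact key x hx y hy hxy s t hs ht hst
    · subst hxy
      have he : s * x + t * x = x := by linear_combination x * hst
      rw [he]
      have : s * min (h₁ x) (h₂ x) + t * min (h₁ x) (h₂ x) = min (h₁ x) (h₂ x) := by
        linear_combination min (h₁ x) (h₂ x) * hst
      linarith
    · have := key y hy x hx hxy t s ht hs (by linarith)
      have hcomm : t * y + s * x = s * x + t * y := by ring
      rw [hcomm] at this
      linarith
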